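/- Let K be a commutative ring, n a positive integer, r, s ∈ Kⁿ and t ∈ K. Each Heisenberg matrix X(a,b,c) is invertible with inverse X(−a,−b, a·b − c), and the set of conjugates {X(a,b,c) * X(r,s,t) * X(a,b,c)⁻¹ : a, b ∈ Kⁿ, c ∈ K} equals {X(r, s, t+ℓ) : ℓ ∈ I}, where I is the ideal of K generated by the elements r₁, …, rₙ, s₁, …, sₙ. -/

import Mathlib

open Matrix

/-- The Heisenberg matrix `X(a,b,c)`: the `(n+2)×(n+2)` identity matrix modified so that
its `(0, i)`-entry is `aᵢ` for `i = 1, …, n`, its `(i, n+1)`-entry is `bᵢ` for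
`i = 1, …, n`, and its `(0, n+1)`-entry is `c`. -/
def heisenbergMatrix {K : Type*} [CommRing K] {n : ℕ} (a b : Fin n → K) (c : K) :
    Matrix (Fin (n + 2)) (Fin (n + 2)) K :=
  1 + ∑ k : Fin n, Matrix.single 0 k.succ.castSucc (a k)
    + ∑ k : Fin n, Matrix.single k.succ.castSucc (Fin.last (n + 1)) (b k)
    + Matrix.single 0 (Fin.last (n + 1)) c

section Aux

variable {K : Type*} [CommRing K] {n : ℕ}

lemma heis_ne0 (k : Fin n) : (k.succ.castSucc : Fin (n+2)) ≠ 0 := by simp [Fin.ext_iff]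

lemma heis_neLast (k : Fin n) : (k.succ.castSucc : Fin (n+2)) ≠ Fin.last (n+1) := by
  simp [Fin.ext_iff]; omega

lemma heis_last_ne0 : (Fin.last (n+1) : Fin (n+2)) ≠ 0 := by simp [Fin.ext_iff]

lemma heis_cs_inj {k l : Fin n} (h : (k.succ.castSucc : Fin (n+2)) = l.succ.castSucc) :
    k = l := by simpa [Fin.ext_iff] using h

lemma heis_std_sum {m : Type*} [DecidableEq m] (i j : m) {ι : Type*} (S : Finset ι)
    (f : ι → K) :
    Matrix.single i j (∑ k ∈ S, f k) = ∑ k ∈ S, Matrix.single i j (f k) := by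
  ext a b
  simp only [Matrix.single, Matrix.of_apply, Matrix.sum_apply]
  split <;> simp_all

lemma heis_AB (a b : Fin n → K) :
    (∑ k : Fin n, Matrix.single (0 : Fin (n+2)) k.succ.castSucc (a k)) *
    (∑ k : Fin n, Matrix.single k.succ.castSucc (Fin.last (n+1)) (b k)) =
    Matrix.single 0 (Fin.last (n+1)) (a ⬝ᵥ b) := by
  rw [Finset.sum_mul_sum, dotProduct, heis_std_sum]
  refine Finset.sum_congr rfl fun i _ => ?_
  rw [Finset.sum_eq_single i]
  · rw [Matrix.single_mul_single_same]
  · intro j _ hji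
    apply Matrix.single_mul_single_of_ne
    exact fun h => hji (heis_cs_inj h).symm
  · simp

variable (a b a' b' : Fin n → K) (c c' : K)

lemma heis_zAA :
    (∑ k : Fin n, Matrix.single (0 : Fin (n+2)) k.succ.castSucc (a k)) *
    (∑ k : Fin n, Matrix.single (0 : Fin (n+2)) k.succ.castSucc (a' k)) = 0 := by
  rw [Finset.sum_mul_sum]
  refine Finset.sum_eq_zero fun i _ => Finset.sum_eq_zero fun j _ => ?_
  apply Matrix.single_mul_single_of_ne; exact heis_ne0 i

lemma heis_zAC :
    (∑ k : Fin n, Matrix.single (0 : Fin (n+2)) k.succ.castSucc (a k)) *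
    Matrix.single (0 : Fin (n+2)) (Fin.last (n+1)) c = 0 := by
  rw [Finset.sum_mul]
  refine Finset.sum_eq_zero fun i _ => ?_
  apply Matrix.single_mul_single_of_ne; exact heis_ne0 i

lemma heis_zBA :
    (∑ k : Fin n, Matrix.single k.succ.castSucc (Fin.last (n+1)) (b k)) *
    (∑ k : Fin n, Matrix.single (0 : Fin (n+2)) k.succ.castSucc (a' k)) = 0 := by
  rw [Finset.sum_mul_sum]
  refine Finset.sum_eq_zero fun i _ => Finset.sum_eq_zero fun j _ => ?_
  apply Matrix.single_mul_single_of_ne; exact heis_last_ne0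

lemma heis_zBB :
    (∑ k : Fin n, Matrix.single k.succ.castSucc (Fin.last (n+1)) (b k)) *
    (∑ k : Fin n, Matrix.single k.succ.castSucc (Fin.last (n+1)) (b' k)) = 0 := by
  rw [Finset.sum_mul_sum]
  refine Finset.sum_eq_zero fun i _ => Finset.sum_eq_zero fun j _ => ?_
  apply Matrix.single_mul_single_of_ne; exact (heis_neLast j).symm

lemma heis_zBC :
    (∑ k : Fin n, Matrix.single k.succ.castSucc (Fin.last (n+1)) (b k)) *
    Matrix.single (0 : Fin (n+2)) (Fin.last (n+1)) c = 0 := by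
  rw [Finset.sum_mul]
  refine Finset.sum_eq_zero fun i _ => ?_
  apply Matrix.single_mul_single_of_ne; exact heis_last_ne0

lemma heis_zCA :
    Matrix.single (0 : Fin (n+2)) (Fin.last (n+1)) c *
    (∑ k : Fin n, Matrix.single (0 : Fin (n+2)) k.succ.castSucc (a' k)) = 0 := by
  rw [Finset.mul_sum]
  refine Finset.sum_eq_zero fun i _ => ?_
  apply Matrix.single_mul_single_of_ne; exact heis_last_ne0

lemma heis_zCB :
    Matrix.single (0 : Fin (n+2)) (Fin.last (n+1)) c *
    (∑ k : Fin n, Matrix.single k.succ.castSucc (Fin.last (n+1)) (b' k)) = 0 := by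
  rw [Finset.mul_sum]
  refine Finset.sum_eq_zero fun i _ => ?_
  apply Matrix.single_mul_single_of_ne; exact (heis_neLast i).symm

lemma heis_zCC :
    Matrix.single (0 : Fin (n+2)) (Fin.last (n+1)) c *
    Matrix.single (0 : Fin (n+2)) (Fin.last (n+1)) c' = 0 := by
  apply Matrix.single_mul_single_of_ne; exact heis_last_ne0

lemma heis_mul :
    heisenbergMatrix a b c * heisenbergMatrix a' b' c' =
    heisenbergMatrix (a + a') (b + b') (c + c' + a ⬝ᵥ b') := by
  unfold heisenbergMatrix
  simp only [add_mul, mul_add, one_mul, mul_one, heis_AB, heis_zAA, heis_zAC, heis_zBA,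
    heis_zBB, heis_zBC, heis_zCA, heis_zCB, heis_zCC, add_zero, zero_add]
  simp only [Pi.add_apply, Matrix.single_add, Finset.sum_add_distrib]
  abel

lemma heis_zero : heisenbergMatrix (0 : Fin n → K) 0 0 = (1 : Matrix (Fin (n+2)) (Fin (n+2)) K) := by
  simp [heisenbergMatrix]

end Aux

theorem heisenbergMatrix_conjugates
    {K : Type*} [CommRing K] {n : ℕ} (hn : 0 < n)
    (r s : Fin n → K) (t : K) :
    (∀ (a b : Fin n → K) (c : K),
      heisenbergMatrix a b c * heisenbergMatrix (-a) (-b) (a ⬝ᵥ b - c) = 1 ∧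
      heisenbergMatrix (-a) (-b) (a ⬝ᵥ b - c) * heisenbergMatrix a b c = 1) ∧
    {M : Matrix (Fin (n + 2)) (Fin (n + 2)) K |
        ∃ (a b : Fin n → K) (c : K),
          M = heisenbergMatrix a b c * heisenbergMatrix r s t
                * heisenbergMatrix (-a) (-b) (a ⬝ᵥ b - c)} =
      {M : Matrix (Fin (n + 2)) (Fin (n + 2)) K |
        ∃ ℓ ∈ Ideal.span (Set.range r ∪ Set.range s),
          M = heisenbergMatrix r s (t + ℓ)} := by
  have hinv : ∀ (a b : Fin n → K) (c : K),
      heisenbergMatrix a b c * heisenbergMatrix (-a) (-b) (a ⬝ᵥ b - c) = 1 := by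
    intro a b c
    rw [heis_mul]
    have : a ⬝ᵥ (-b) = -(a ⬝ᵥ b) := by simp
    rw [show a + -a = 0 by ring, show b + -b = 0 by ring, this]
    rw [show c + (a ⬝ᵥ b - c) + -(a ⬝ᵥ b) = 0 by ring, heis_zero]
  have hinv' : ∀ (a b : Fin n → K) (c : K),
      heisenbergMatrix (-a) (-b) (a ⬝ᵥ b - c) * heisenbergMatrix a b c = 1 := by
    intro a b c
    rw [heis_mul]
    have : (-a) ⬝ᵥ b = -(a ⬝ᵥ b) := by simp
    rw [show -a + a = 0 by ring, show -b + b = 0 by ring, this]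
    rw [show a ⬝ᵥ b - c + c + -(a ⬝ᵥ b) = 0 by ring, heis_zero]
  refine ⟨fun a b c => ⟨hinv a b c, hinv' a b c⟩, ?_⟩
  have hconj : ∀ (a b : Fin n → K) (c : K),
      heisenbergMatrix a b c * heisenbergMatrix r s t
        * heisenbergMatrix (-a) (-b) (a ⬝ᵥ b - c) =
      heisenbergMatrix r s (t + (a ⬝ᵥ s - r ⬝ᵥ b)) := by
    intro a b c
    rw [heis_mul, heis_mul]
    have h1 : (a + r) ⬝ᵥ (-b) = -(a ⬝ᵥ b) - r ⬝ᵥ b := by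
      rw [add_dotProduct, dotProduct_neg, dotProduct_neg]; ring
    rw [show a + r + -a = r by ring, show b + s + -b = s by ring, h1,
      show c + t + a ⬝ᵥ s + (a ⬝ᵥ b - c) + (-(a ⬝ᵥ b) - r ⬝ᵥ b) = t + (a ⬝ᵥ s - r ⬝ᵥ b) by ring]
  have hmem : Set.range r ∪ Set.range s = Set.range (Sum.elim r s) := by
    ext x; simp [Sum.exists]
  ext M
  simp only [Set.mem_setOf_eq]
  constructor
  · rintro ⟨a, b, c, rfl⟩
    refine ⟨a ⬝ᵥ s - r ⬝ᵥ b, ?_, hconj a b c⟩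
    apply sub_mem
    · exact Ideal.sum_mem _ fun i _ =>
        Ideal.mul_mem_left _ _ (Ideal.subset_span (Or.inr ⟨i, rfl⟩))
    · exact Ideal.sum_mem _ fun i _ =>
        Ideal.mul_mem_right _ _ (Ideal.subset_span (Or.inl ⟨i, rfl⟩))
  · rintro ⟨ℓ, hℓ, rfl⟩
    rw [hmem, Ideal.mem_span_range_iff_exists_fun] at hℓ
    obtain ⟨f, hf⟩ := hℓ
    refine ⟨fun i => f (Sum.inr i), fun i => -f (Sum.inl i), 0, ?_⟩
    rw [hconj]
    have key : (fun i => f (Sum.inr i)) ⬝ᵥ s - r ⬝ᵥ (fun i => -f (Sum.inl i)) = ℓ := by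
      rw [← hf, Fintype.sum_sum_type]
      simp only [dotProduct, mul_neg, sub_neg_eq_add, Finset.sum_neg_distrib]
      rw [add_comm]
      congr 1
      exact Finset.sum_congr rfl fun i _ => mul_comm _ _
    rw [key]
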